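/- For a bounded domain Ω in ℝ^n, the complement ℝ^n \ Ω is connected if and only if the boundary ∂Ω is connected. -/

import Mathlib

open Complex Metric Set Finset Real

set_option maxHeartbeats 1000000

-- A continuous real function taking integer values on a preconnected set is constant there.
lemma aux_int_const {X : Type*} [TopologicalSpace X] {s : Set X} (hs : IsPreconnected s)
    {f : X → ℝ} (hf : ContinuousOn f s) (hint : ∀ x ∈ s, ∃ m : ℤ, f x = m)
    {x y : X} (hx : x ∈ s) (hy : y ∈ s) : f x = f y := by
  by_contra hne
  have himg : IsPreconnected (f '' s) := hs.image f hf
  have hord := himg.ordConnected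
  obtain ⟨a, ha⟩ := hint x hx
  obtain ⟨b, hb⟩ := hint y hy
  have hab : a ≠ b := by rintro rfl; exact hne (ha.trans hb.symm)
  rcases hab.lt_or_gt with h | h
  · have hc : (a : ℝ) + 1/2 ∈ Set.Icc (f x) (f y) := by
      constructor
      · rw [ha]; linarith
      · rw [hb]
        have : (a : ℝ) + 1 ≤ b := by exact_mod_cast h
        linarith
    obtain ⟨z, hz, hzc⟩ := hord.out ⟨x, hx, rfl⟩ ⟨y, hy, rfl⟩ hc
    obtain ⟨m, hm⟩ := hint z hz
    rw [hm] at hzc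
    have h2 : (2 * m : ℝ) = 2 * a + 1 := by linarith [hzc]
    have : (2 * m : ℤ) = 2 * a + 1 := by exact_mod_cast h2
    omega
  · have hc : (b : ℝ) + 1/2 ∈ Set.Icc (f y) (f x) := by
      constructor
      · rw [hb]; linarith
      · rw [ha]
        have : (b : ℝ) + 1 ≤ a := by exact_mod_cast h
        linarith
    obtain ⟨z, hz, hzc⟩ := hord.out ⟨y, hy, rfl⟩ ⟨x, hx, rfl⟩ hc
    obtain ⟨m, hm⟩ := hint z hz
    rw [hm] at hzc
    have h2 : (2 * m : ℝ) = 2 * b + 1 := by linarith [hzc]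
    have : (2 * m : ℤ) = 2 * b + 1 := by exact_mod_cast h2
    omega

lemma aux_re_pos {z w : ℂ} (hz : ‖z‖ = 1) (hw : ‖w‖ = 1)
    (hd : dist z w < 1) : 0 < (z / w).re := by
  have hwne : w ≠ 0 := by intro h; rw [h] at hw; simp at hw
  have h1 : z.re * z.re + z.im * z.im = 1 := by
    rw [← Complex.normSq_apply, ← Complex.sq_norm, hz]; norm_num
  have h2 : w.re * w.re + w.im * w.im = 1 := by
    rw [← Complex.normSq_apply, ← Complex.sq_norm, hw]; norm_num
  have hd0 : (0:ℝ) ≤ dist z w := dist_nonneg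
  have hdn : (z.re - w.re) * (z.re - w.re) + (z.im - w.im) * (z.im - w.im) < 1 := by
    have : normSq (z - w) < 1 := by
      rw [← Complex.sq_norm, ← Complex.dist_eq]
      nlinarith
    simpa [Complex.normSq_apply, Complex.sub_re, Complex.sub_im] using this
  rw [div_eq_mul_inv, Complex.inv_eq_conj hw]
  simp only [Complex.mul_re, Complex.conj_re, Complex.conj_im]
  nlinarith

-- Any continuous circle-valued map on Euclidean space which is `1` outside a ball
-- admits a continuous logarithm (lift along `t ↦ exp (t * I)`).
lemma aux_lift {n : ℕ} {g : EuclideanSpace ℝ (Fin n) → ℂ} (hg : Continuous g)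
    (habs : ∀ x, ‖g x‖ = 1) {R : ℝ} (hR : 0 < R)
    (hout : ∀ x, R ≤ ‖x‖ → g x = 1) :
    ∃ h : EuclideanSpace ℝ (Fin n) → ℝ, Continuous h ∧
      ∀ x, Complex.exp ((h x : ℂ) * Complex.I) = g x := by
  have hgne : ∀ x, g x ≠ 0 := fun x hx => by
    have := habs x; rw [hx] at this; simp at this
  set M : ℝ := R + 1 with hM
  have hMpos : 0 < M := by linarith
  set r : EuclideanSpace ℝ (Fin n) → EuclideanSpace ℝ (Fin n) :=
    fun x => (M / max M ‖x‖) • x with hr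
  have hmaxpos : ∀ x : EuclideanSpace ℝ (Fin n), 0 < max M ‖x‖ :=
    fun x => lt_of_lt_of_le hMpos (le_max_left _ _)
  have hrcont : Continuous r := by
    apply Continuous.fun_smul _ continuous_id
    exact continuous_const.div (continuous_const.max continuous_norm)
      (fun x => (hmaxpos x).ne')
  have hr_eq : ∀ x : EuclideanSpace ℝ (Fin n), ‖x‖ ≤ M → r x = x := by
    intro x hx
    simp only [hr, max_eq_left hx, div_self hMpos.ne', one_smul]
  have hr_norm : ∀ x : EuclideanSpace ℝ (Fin n), ‖r x‖ = (M / max M ‖x‖) * ‖x‖ := by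
    intro x
    rw [norm_smul, Real.norm_eq_abs, _root_.abs_of_pos (div_pos hMpos (hmaxpos x))]
  have hr_le : ∀ x : EuclideanSpace ℝ (Fin n), ‖r x‖ ≤ M := by
    intro x
    rw [hr_norm]
    calc M / max M ‖x‖ * ‖x‖ ≤ M / max M ‖x‖ * max M ‖x‖ := by
          apply mul_le_mul_of_nonneg_left (le_max_right _ _)
            (div_pos hMpos (hmaxpos x)).le
      _ = M := div_mul_cancel₀ _ (hmaxpos x).ne'
  have hr_big : ∀ x : EuclideanSpace ℝ (Fin n), M < ‖x‖ → ‖r x‖ = M := by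
    intro x hx
    rw [hr_norm, max_eq_right hx.le, div_mul_cancel₀]
    exact (lt_trans hMpos hx).ne'
  have hucont : UniformContinuousOn g (closedBall (0:EuclideanSpace ℝ (Fin n)) M) :=
    (isCompact_closedBall (0:EuclideanSpace ℝ (Fin n)) M).uniformContinuousOn_of_continuous
      hg.continuousOn
  obtain ⟨δ, hδpos, hδ⟩ := (Metric.uniformContinuousOn_iff.mp hucont) 1 one_pos
  obtain ⟨N, hN⟩ := exists_nat_gt (M / δ)
  have hNpos : 0 < (N : ℝ) := lt_of_lt_of_le (div_pos hMpos hδpos) hN.le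
  set c : ℕ → EuclideanSpace ℝ (Fin n) → EuclideanSpace ℝ (Fin n) :=
    fun j x => ((j : ℝ) / N) • r x with hc
  have hc_mem : ∀ (j : ℕ) (x : EuclideanSpace ℝ (Fin n)), j ≤ N →
      c j x ∈ closedBall (0:EuclideanSpace ℝ (Fin n)) M := by
    intro j x hj
    rw [mem_closedBall_zero_iff, hc]
    simp only [norm_smul, Real.norm_eq_abs]
    rw [_root_.abs_of_nonneg (div_nonneg (Nat.cast_nonneg j) hNpos.le)]
    calc (j:ℝ)/N * ‖r x‖ ≤ 1 * M := by
          apply mul_le_mul _ (hr_le x) (norm_nonneg _) one_pos.le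
          rw [div_le_one hNpos]; exact_mod_cast hj
      _ = M := one_mul M
  have hc_dist : ∀ (j : ℕ) (x : EuclideanSpace ℝ (Fin n)),
      dist (c (j+1) x) (c j x) < δ := by
    intro j x
    rw [dist_eq_norm, hc]
    simp only
    rw [← sub_smul]
    have heq : ((j:ℝ)+1)/N - (j:ℝ)/N = 1/N := by field_simp; ring
    push_cast
    rw [heq, norm_smul, Real.norm_eq_abs, _root_.abs_of_pos (by positivity : (0:ℝ) < 1/N)]
    calc 1/(N:ℝ) * ‖r x‖ ≤ 1/N * M := by
          apply mul_le_mul_of_nonneg_left (hr_le x) (by positivity)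
      _ < δ := by
          rw [div_mul_eq_mul_div, one_mul, div_lt_iff₀ hNpos]
          rw [div_lt_iff₀ hδpos] at hN
          linarith [hN]
  set q : ℕ → EuclideanSpace ℝ (Fin n) → ℂ := fun j x => g (c (j+1) x) / g (c j x) with hq
  have hq_repos : ∀ (j : ℕ) (x : EuclideanSpace ℝ (Fin n)), j < N → 0 < (q j x).re := by
    intro j x hj
    apply aux_re_pos (habs _) (habs _)
    exact hδ _ (hc_mem (j+1) x hj) _ (hc_mem j x (le_of_lt hj)) (hc_dist j x)
  refine ⟨fun x => Complex.arg (g 0) + ∑ j ∈ Finset.range N, Complex.arg (q j x), ?_, ?_⟩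
  · apply continuous_const.add
    apply continuous_finset_sum
    intro j hj
    rw [Finset.mem_range] at hj
    rw [continuous_iff_continuousAt]
    intro x
    have hqc : Continuous (q j) := by
      apply Continuous.div (hg.comp ?_) (hg.comp ?_) (fun y => hgne _)
      · exact continuous_const.fun_smul hrcont
      · exact continuous_const.fun_smul hrcont
    exact (Complex.continuousAt_arg (Or.inl (hq_repos j x hj))).comp hqc.continuousAt
  · intro x
    have key : Complex.exp ((↑(Complex.arg (g 0) + ∑ j ∈ Finset.range N, Complex.arg (q j x)) : ℂ)
        * Complex.I) = g (r x) := by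
      push_cast
      rw [add_mul, Complex.exp_add, Finset.sum_mul, Complex.exp_sum]
      have e0 : Complex.exp ((Complex.arg (g 0) : ℂ) * Complex.I) = g 0 := by
        have := Complex.norm_mul_exp_arg_mul_I (g 0)
        rw [habs 0] at this; simpa using this
      have e1 : ∀ j ∈ Finset.range N,
          Complex.exp ((Complex.arg (q j x) : ℂ) * Complex.I) = q j x := by
        intro j hj
        have habsq : ‖q j x‖ = 1 := by
          rw [hq]; simp only [norm_div, habs]; norm_num
        have := Complex.norm_mul_exp_arg_mul_I (q j x)
        rw [habsq] at this; simpa using this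
      rw [Finset.prod_congr rfl e1]
      have tele : ∀ m : ℕ, (∏ j ∈ Finset.range m, q j x) = g (c m x) / g (c 0 x) := by
        intro m
        induction m with
        | zero => simp [div_self (hgne (c 0 x))]
        | succ m ih =>
            rw [Finset.prod_range_succ, ih, hq]
            rw [div_mul_div_comm, mul_comm (g (c m x))]
            exact mul_div_mul_right _ _ (hgne (c m x))
      rw [e0, tele N]
      have hc0 : c 0 x = 0 := by simp [hc]
      have hcN : c N x = r x := by
        rw [hc]; simp only [div_self hNpos.ne', one_smul]
      rw [hc0, hcN]
      rw [mul_div_assoc']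
      rw [mul_comm, mul_div_assoc, div_self (hgne 0), mul_one]
    rw [key]
    by_cases hx : ‖x‖ ≤ M
    · rw [hr_eq x hx]
    · push_neg at hx
      rw [hout (r x) (by rw [hr_big x hx]; linarith), hout x (by linarith)]

/-- For a bounded domain Ω in ℝⁿ, the complement is connected iff the boundary
is connected. -/
theorem stmt_4 {n : ℕ} (Ω : Set (EuclideanSpace ℝ (Fin n))) (hΩo : IsOpen Ω)
    (hΩne : Ω.Nonempty) (hΩconn : IsConnected Ω)
    (hΩb : Bornology.IsBounded Ω) :
    IsConnected Ωᶜ ↔ IsConnected (frontier Ω) := by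
  classical
  by_cases hcompl : Ωᶜ = ∅
  · have hfr : frontier Ω = ∅ := by
      rw [frontier_eq_closure_inter_closure, hcompl, closure_empty, inter_empty]
    rw [hcompl, hfr]
  · have hcne : Ωᶜ.Nonempty := nonempty_iff_ne_empty.mpr hcompl
    have hΩnu : Ω ≠ univ := by
      intro h
      rw [h, compl_univ] at hcompl
      exact hcompl rfl
    have hfrne : (frontier Ω).Nonempty := nonempty_frontier_iff.mpr ⟨hΩne, hΩnu⟩
    have hfr_sub_c : frontier Ω ⊆ Ωᶜ := by
      intro x hx
      rw [hΩo.frontier_eq] at hx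
      exact hx.2
    have hfr_sub_cl : frontier Ω ⊆ closure Ω := frontier_subset_closure
    constructor
    · -- hard direction: complement connected → frontier connected
      intro hcc
      refine ⟨hfrne, ?_⟩
      rw [isPreconnected_iff_subset_of_fully_disjoint_closed isClosed_frontier]
      intro u v hu hv hsub hdisj
      by_contra hcon
      push_neg at hcon
      obtain ⟨hnu, hnv⟩ := hcon
      set F₁ : Set (EuclideanSpace ℝ (Fin n)) := frontier Ω ∩ u with hF₁
      set F₂ : Set (EuclideanSpace ℝ (Fin n)) := frontier Ω ∩ v with hF₂
      have hF₁ne : F₁.Nonempty := by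
        obtain ⟨x, hx, hxv⟩ := not_subset.mp hnv
        exact ⟨x, hx, (hsub hx).resolve_right hxv⟩
      have hF₂ne : F₂.Nonempty := by
        obtain ⟨x, hx, hxu⟩ := not_subset.mp hnu
        exact ⟨x, hx, (hsub hx).resolve_left hxu⟩
      have hF₁c : IsClosed F₁ := isClosed_frontier.inter hu
      have hF₂c : IsClosed F₂ := isClosed_frontier.inter hv
      have hdisj' : Disjoint F₁ F₂ :=
        hdisj.mono inter_subset_right inter_subset_right
      have hunion : frontier Ω = F₁ ∪ F₂ := by
        apply Set.Subset.antisymm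
        · intro x hx
          rcases hsub hx with h | h
          · exact Or.inl ⟨hx, h⟩
          · exact Or.inr ⟨hx, h⟩
        · rintro x (⟨hx, -⟩ | ⟨hx, -⟩) <;> exact hx
      obtain ⟨R₀, hR₀pos, hR₀⟩ := hΩb.subset_ball_lt 0 0
      set R : ℝ := R₀ + 1 with hRdef
      have hRpos : 0 < R := by positivity
      have hclsub : closure Ω ⊆ ball (0:EuclideanSpace ℝ (Fin n)) R := by
        calc closure Ω ⊆ closedBall 0 R₀ :=
              closure_minimal (hR₀.trans ball_subset_closedBall) Metric.isClosed_closedBall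
          _ ⊆ ball 0 R := closedBall_subset_ball (by linarith)
      obtain ⟨φ, hφ0, hφ1, hφmem⟩ := exists_continuous_zero_one_of_isClosed hF₁c hF₂c hdisj'
      obtain ⟨χ, hχ0, hχ1, hχmem⟩ := exists_continuous_zero_one_of_isClosed
        (isOpen_ball.isClosed_compl) isClosed_closure
        (Disjoint.mono_right hclsub disjoint_compl_left)
      set w : EuclideanSpace ℝ (Fin n) → ℝ := fun x => φ x * χ x with hwdef
      have hwcont : Continuous w := φ.continuous.mul χ.continuous
      have hwF₁ : ∀ x ∈ F₁, w x = 0 := by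
        intro x hx
        simp [hwdef, hφ0 hx]
      have hwF₂ : ∀ x ∈ F₂, w x = 1 := by
        intro x hx
        have h1 : φ x = 1 := hφ1 hx
        have h2 : χ x = 1 := hχ1 (hfr_sub_cl hx.1)
        simp [hwdef, h1, h2]
      have hwout : ∀ x : EuclideanSpace ℝ (Fin n), R ≤ ‖x‖ → w x = 0 := by
        intro x hx
        have : x ∈ (ball (0:EuclideanSpace ℝ (Fin n)) R)ᶜ := by
          simp only [mem_compl_iff, mem_ball_zero_iff]
          exact not_lt.mpr hx
        have h0 : χ x = 0 := hχ0 this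
        simp [hwdef, h0]
      have hwfr : ∀ x ∈ frontier Ω, w x = 0 ∨ w x = 1 := by
        intro x hx
        rw [hunion] at hx
        rcases hx with h | h
        · exact Or.inl (hwF₁ x h)
        · exact Or.inr (hwF₂ x h)
      set g : EuclideanSpace ℝ (Fin n) → ℂ := fun x =>
        if x ∈ closure Ω then Complex.exp ((π * w x : ℝ) * Complex.I)
        else Complex.exp ((-(π * w x) : ℝ) * Complex.I) with hgdef
      have hfragree : ∀ x ∈ frontier Ω,
          Complex.exp ((π * w x : ℝ) * Complex.I) = Complex.exp ((-(π * w x) : ℝ) * Complex.I) := by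
        intro x hx
        rcases hwfr x hx with h | h
        · rw [h]; norm_num
        · rw [h]
          push_cast
          rw [mul_one, neg_mul, Complex.exp_neg, Complex.exp_pi_mul_I]
          norm_num
      have hgcont : Continuous g := by
        rw [hgdef]
        apply Continuous.if
        · intro a ha
          have ha' : a ∈ frontier (closure Ω) := by
            simpa [Set.setOf_mem_eq] using ha
          exact hfragree a (frontier_closure_subset ha')
        · exact Complex.continuous_exp.comp
            ((Complex.continuous_ofReal.comp (continuous_const.mul hwcont)).mul continuous_const)
        · exact Complex.continuous_exp.comp
            ((Complex.continuous_ofReal.comp (continuous_const.mul hwcont).neg).mul continuous_const)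
      have habs : ∀ x, ‖g x‖ = 1 := by
        intro x
        rw [hgdef]
        by_cases hx : x ∈ closure Ω <;> simp [hx, Complex.norm_exp]
      have hgout : ∀ x : EuclideanSpace ℝ (Fin n), R ≤ ‖x‖ → g x = 1 := by
        intro x hx
        have hnotc : x ∉ closure Ω := fun h =>
          absurd (mem_ball_zero_iff.mp (hclsub h)) (not_lt.mpr hx)
        rw [hgdef]
        simp only [hnotc, if_false, hwout x hx]
        norm_num
      obtain ⟨h, hhcont, hhexp⟩ := aux_lift hgcont habs hRpos hgout
      have hgA : ∀ x ∈ closure Ω, g x = Complex.exp ((π * w x : ℝ) * Complex.I) := by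
        intro x hx
        rw [hgdef]
        simp [hx]
      have hgB : ∀ x ∈ Ωᶜ, g x = Complex.exp ((-(π * w x) : ℝ) * Complex.I) := by
        intro x hx
        by_cases hxc : x ∈ closure Ω
        · have hxf : x ∈ frontier Ω := by
            rw [hΩo.frontier_eq]; exact ⟨hxc, hx⟩
          rw [hgA x hxc, hfragree x hxf]
        · rw [hgdef]; simp [hxc]
      -- integer valued normalized differences
      have keyA : ∀ x ∈ closure Ω, ∃ m : ℤ, (h x - π * w x) / (2 * π) = m := by
        intro x hx
        have hone : Complex.exp ((↑(h x - π * w x) : ℂ) * Complex.I) = 1 := by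
          rw [Complex.ofReal_sub, sub_mul, Complex.exp_sub, hhexp x, hgA x hx]
          exact div_self (Complex.exp_ne_zero _)
        rw [Complex.exp_eq_one_iff] at hone
        obtain ⟨m, hm⟩ := hone
        refine ⟨m, ?_⟩
        have hcast : ((h x - π * w x : ℝ) : ℂ) = (m : ℂ) * (2 * π) := by
          apply mul_right_cancel₀ Complex.I_ne_zero
          rw [hm]; ring
        have hrr : h x - π * w x = m * (2 * π) := by exact_mod_cast hcast
        rw [hrr]
        field_simp
      have keyB : ∀ x ∈ Ωᶜ, ∃ m : ℤ, (h x + π * w x) / (2 * π) = m := by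
        intro x hx
        have hone : Complex.exp ((↑(h x + π * w x) : ℂ) * Complex.I) = 1 := by
          rw [Complex.ofReal_add, add_mul, Complex.exp_add, hhexp x, hgB x hx,
            ← Complex.exp_add,
            show ((-(π * w x) : ℝ) : ℂ) * Complex.I + ((π * w x : ℝ) : ℂ) * Complex.I = 0 by
              push_cast; ring,
            Complex.exp_zero]
        rw [Complex.exp_eq_one_iff] at hone
        obtain ⟨m, hm⟩ := hone
        refine ⟨m, ?_⟩
        have hcast : ((h x + π * w x : ℝ) : ℂ) = (m : ℂ) * (2 * π) := by
          apply mul_right_cancel₀ Complex.I_ne_zero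
          rw [hm]; ring
        have hrr : h x + π * w x = m * (2 * π) := by exact_mod_cast hcast
        rw [hrr]
        field_simp
      obtain ⟨x₁, hx₁⟩ := hF₁ne
      obtain ⟨x₂, hx₂⟩ := hF₂ne
      have hx₁f : x₁ ∈ frontier Ω := hx₁.1
      have hx₂f : x₂ ∈ frontier Ω := hx₂.1
      have hAconn : IsPreconnected (closure Ω) := hΩconn.isPreconnected.closure
      have hBconn : IsPreconnected (Ωᶜ) := hcc.isPreconnected
      have hcontA : ContinuousOn (fun x => (h x - π * w x) / (2 * π)) (closure Ω) :=
        ((hhcont.sub (continuous_const.mul hwcont)).div_const _).continuousOn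
      have hcontB : ContinuousOn (fun x => (h x + π * w x) / (2 * π)) (Ωᶜ) :=
        ((hhcont.add (continuous_const.mul hwcont)).div_const _).continuousOn
      have cA := aux_int_const hAconn hcontA keyA (hfr_sub_cl hx₂f) (hfr_sub_cl hx₁f)
      have cB := aux_int_const hBconn hcontB keyB (hfr_sub_c hx₂f) (hfr_sub_c hx₁f)
      have hw1 : w x₁ = 0 := hwF₁ x₁ hx₁
      have hw2 : w x₂ = 1 := hwF₂ x₂ hx₂
      rw [hw1, hw2] at cA cB
      simp only [mul_zero, mul_one, sub_zero, add_zero] at cA cB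
      have hπ : (0:ℝ) < π := Real.pi_pos
      have h2π : (2:ℝ) * π ≠ 0 := by positivity
      rw [div_eq_div_iff (by positivity) (by positivity)] at cA cB
      nlinarith [cA, cB]
    · -- easy direction: frontier connected → complement connected
      intro hfc
      refine ⟨hcne, ?_⟩
      obtain ⟨x₀, hx₀⟩ := hfrne
      apply isPreconnected_of_forall x₀
      intro y hy
      refine ⟨frontier Ω ∪ closure (connectedComponentIn Ωᶜ y), ?_,
        Or.inl hx₀, Or.inr (subset_closure (mem_connectedComponentIn hy)), ?_⟩
      · apply union_subset hfr_sub_c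
        calc closure (connectedComponentIn Ωᶜ y) ⊆ closure Ωᶜ :=
              closure_mono (connectedComponentIn_subset _ _)
          _ = Ωᶜ := hΩo.isClosed_compl.closure_eq
      · set K : Set (EuclideanSpace ℝ (Fin n)) := closure (connectedComponentIn Ωᶜ y) with hK
        have hKconn : IsPreconnected K := isPreconnected_connectedComponentIn.closure
        have hKsub : K ⊆ Ωᶜ := by
          calc K ⊆ closure Ωᶜ := closure_mono (connectedComponentIn_subset _ _)
            _ = Ωᶜ := hΩo.isClosed_compl.closure_eq
        have hKne : K.Nonempty := ⟨y, subset_closure (mem_connectedComponentIn hy)⟩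
        have hKnu : K ≠ Set.univ := by
          intro hKu
          obtain ⟨z, hz⟩ := hΩne
          exact (hKsub (hKu ▸ mem_univ z)) hz
        obtain ⟨p, hp⟩ : (frontier K).Nonempty := nonempty_frontier_iff.mpr ⟨hKne, hKnu⟩
        have hpK : p ∈ K := isClosed_closure.frontier_subset hp
        have hpcl : p ∈ closure Ω := by
          by_contra hpc
          rw [_root_.mem_closure_iff] at hpc
          push_neg at hpc
          obtain ⟨O, hOopen, hpO, hOΩ⟩ := hpc
          obtain ⟨ε, hεpos, hball⟩ := Metric.isOpen_iff.mp hOopen p hpO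
          have hmeet : (ball p ε ∩ connectedComponentIn Ωᶜ y).Nonempty :=
            _root_.mem_closure_iff.mp hpK (ball p ε) isOpen_ball (mem_ball_self hεpos)
          obtain ⟨z, hz1, hz2⟩ := hmeet
          have hballsub : ball p ε ⊆ Ωᶜ := by
            intro a ha haΩ
            have : (O ∩ Ω).Nonempty := ⟨a, hball ha, haΩ⟩
            rw [hOΩ] at this
            exact Set.not_nonempty_empty this
          have hunionpre : IsPreconnected (ball p ε ∪ connectedComponentIn Ωᶜ y) :=
            (convex_ball p ε).isPreconnected.union z hz1 hz2 isPreconnected_connectedComponentIn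
          have hsubcomp : ball p ε ∪ connectedComponentIn Ωᶜ y ⊆ connectedComponentIn Ωᶜ y :=
            hunionpre.subset_connectedComponentIn
              (Or.inr (mem_connectedComponentIn hy))
              (union_subset hballsub (connectedComponentIn_subset _ _))
          have hpint : p ∈ interior K :=
            mem_interior.mpr ⟨ball p ε,
              ((subset_union_left.trans hsubcomp).trans subset_closure),
              isOpen_ball, mem_ball_self hεpos⟩
          exact hp.2 hpint
        have hpfr : p ∈ frontier Ω := by
          rw [hΩo.frontier_eq]
          exact ⟨hpcl, hKsub hpK⟩
        exact hfc.isPreconnected.union p hpfr hpK hKconn
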